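/- Fix ε > 0, L₁ > 0, T > 0 and a continuous path ω : [0,T] → ℝ^d with ω(0) = 0. With the hitting times H₀ := 0, H_{n+1} := inf { t ≥ H_n : |ω(t) − ω(H_n)| + L₁(t − H_n) ≥ ε } ∧ T, if H_n < T then Σ_{k=0}^{n−1} ( 2 |ω(H_{k+1}) − ω(H_k)|² + C (H_{k+1} − H_k) ) ≥ n ε², where C := 2 L₁ ε. In particular, if additionally the path satisfies Σ_{k=0}^{n−1} |ω(H_{k+1}) − ω(H_k)|² ≤ M, then n ε² ≤ 2M + C T. -/

import Mathlib

open Set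

/-- Pathwise core of Lemma 3.4: if `H_n < T` then the sum of
`2|ω(H_{k+1}) − ω(H_k)|² + C (H_{k+1} − H_k)` over `k < n` is at least `n ε²`,
where `C = 2 L₁ ε`; consequently a quadratic-increment bound `M` forces
`n ε² ≤ 2M + C T`. -/
theorem hitting_times_quadratic_bound (d : ℕ) (T ε L₁ : ℝ)
    (hT : 0 < T) (hε : 0 < ε) (hL : 0 < L₁)
    (ω : ℝ → EuclideanSpace ℝ (Fin d)) (hω : ContinuousOn ω (Icc 0 T)) (h0 : ω 0 = 0)
    (H : ℕ → ℝ) (hH0 : H 0 = 0)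
    (hHrec : ∀ n, H (n + 1) =
      sInf ({t ∈ Icc (H n) T | ε ≤ ‖ω t - ω (H n)‖ + L₁ * (t - H n)} ∪ {T}))
    (n : ℕ) (hn : H n < T) :
    (n : ℝ) * ε ^ 2 ≤ ∑ k ∈ Finset.range n,
      (2 * ‖ω (H (k + 1)) - ω (H k)‖ ^ 2 + (2 * L₁ * ε) * (H (k + 1) - H k)) ∧
    ∀ M : ℝ, (∑ k ∈ Finset.range n, ‖ω (H (k + 1)) - ω (H k)‖ ^ 2) ≤ M →
      (n : ℝ) * ε ^ 2 ≤ 2 * M + (2 * L₁ * ε) * T := by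
  -- basic range facts
  have hrange : ∀ k, 0 ≤ H k ∧ H k ≤ T := by
    intro k
    induction k with
    | zero => exact ⟨le_of_eq hH0.symm, hH0 ▸ hT.le⟩
    | succ k ih =>
      have hbdd : BddBelow ({t ∈ Icc (H k) T | ε ≤ ‖ω t - ω (H k)‖ + L₁ * (t - H k)} ∪ {T}) := by
        refine ⟨H k, ?_⟩
        rintro t (⟨⟨h1, _⟩, _⟩ | rfl)
        · exact h1
        · exact ih.2
      have h1 : H k ≤ H (k + 1) := by
        rw [hHrec]
        refine le_csInf ⟨T, Or.inr rfl⟩ ?_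
        rintro t (⟨⟨h1, _⟩, _⟩ | rfl)
        · exact h1
        · exact ih.2
      have h2 : H (k + 1) ≤ T := by
        rw [hHrec]
        exact csInf_le hbdd (Or.inr rfl)
      exact ⟨ih.1.trans h1, h2⟩
  have hmono : Monotone H := by
    refine monotone_nat_of_le_succ (fun k => ?_)
    rw [hHrec]
    refine le_csInf ⟨T, Or.inr rfl⟩ ?_
    rintro t (⟨⟨h1, _⟩, _⟩ | rfl)
    · exact h1
    · exact (hrange k).2
  -- the per-step key inequality
  have key : ∀ k, k < n → ε ^ 2 ≤ 2 * ‖ω (H (k + 1)) - ω (H k)‖ ^ 2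
      + (2 * L₁ * ε) * (H (k + 1) - H k) := by
    intro k hk
    have hkT : H (k + 1) < T := lt_of_le_of_lt (hmono (Nat.succ_le_of_lt hk)) hn
    have hbdd : BddBelow ({t ∈ Icc (H k) T | ε ≤ ‖ω t - ω (H k)‖ + L₁ * (t - H k)} ∪ {T}) := by
      refine ⟨H k, ?_⟩
      rintro t (⟨⟨h1, _⟩, _⟩ | rfl)
      · exact h1
      · exact (hrange k).2
    -- upper bound on the time increment
    have hb : L₁ * (H (k + 1) - H k) ≤ ε := by
      by_contra hcon
      push_neg at hcon
      have hdiv : 0 < ε / L₁ := by positivity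
      have ht1 : H k + ε / L₁ < H (k + 1) := by
        have : ε / L₁ < H (k + 1) - H k := (div_lt_iff₀ hL).2 (by linarith [hcon])
        linarith
      have htmem : H k + ε / L₁ ∈
          {t ∈ Icc (H k) T | ε ≤ ‖ω t - ω (H k)‖ + L₁ * (t - H k)} := by
        refine ⟨⟨by linarith, le_of_lt (ht1.trans_le hkT.le)⟩, ?_⟩
        have heq : L₁ * (H k + ε / L₁ - H k) = ε := by
          field_simp
          ring
        nlinarith [norm_nonneg (ω (H k + ε / L₁) - ω (H k))]
      have := csInf_le hbdd (Or.inl htmem)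
      rw [← hHrec] at this
      linarith
    -- the set is closed, so the infimum is attained; `H (k+1) < T` forces it in the sep set
    have hsub : Icc (H k) T ⊆ Icc 0 T := Icc_subset_Icc (hrange k).1 le_rfl
    have hcont : ContinuousOn (fun t => ‖ω t - ω (H k)‖ + L₁ * (t - H k)) (Icc (H k) T) := by
      refine ContinuousOn.add ?_ (by fun_prop)
      exact ((hω.mono hsub).sub continuousOn_const).norm
    have hclosed : IsClosed ({t ∈ Icc (H k) T | ε ≤ ‖ω t - ω (H k)‖ + L₁ * (t - H k)} ∪ {T}) := by
      refine IsClosed.union ?_ isClosed_singleton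
      have : {t ∈ Icc (H k) T | ε ≤ ‖ω t - ω (H k)‖ + L₁ * (t - H k)}
          = Icc (H k) T ∩ (fun t => ‖ω t - ω (H k)‖ + L₁ * (t - H k)) ⁻¹' (Ici ε) := by
        ext t; simp [Set.mem_sep_iff, Set.mem_preimage, Set.mem_Ici]
      rw [this]
      exact hcont.preimage_isClosed_of_isClosed isClosed_Icc isClosed_Ici
    have hmem : H (k + 1) ∈ {t ∈ Icc (H k) T | ε ≤ ‖ω t - ω (H k)‖ + L₁ * (t - H k)} ∪ {T} := by
      rw [hHrec]
      exact hclosed.csInf_mem ⟨T, Or.inr rfl⟩ hbdd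
    have ha : ε ≤ ‖ω (H (k + 1)) - ω (H k)‖ + L₁ * (H (k + 1) - H k) := by
      rcases hmem with ⟨_, h⟩ | h
      · exact h
      · exact absurd h hkT.ne
    have hb0 : 0 ≤ L₁ * (H (k + 1) - H k) := by
      have := hmono (Nat.le_succ k)
      nlinarith
    nlinarith [norm_nonneg (ω (H (k + 1)) - ω (H k)),
      sq_nonneg (‖ω (H (k + 1)) - ω (H k)‖ - L₁ * (H (k + 1) - H k))]
  have sum1 : (n : ℝ) * ε ^ 2 ≤ ∑ k ∈ Finset.range n,
      (2 * ‖ω (H (k + 1)) - ω (H k)‖ ^ 2 + (2 * L₁ * ε) * (H (k + 1) - H k)) := by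
    calc (n : ℝ) * ε ^ 2 = ∑ _k ∈ Finset.range n, ε ^ 2 := by
          simp [Finset.sum_const, nsmul_eq_mul]
      _ ≤ _ := Finset.sum_le_sum (fun k hk => key k (Finset.mem_range.1 hk))
  refine ⟨sum1, fun M hM => ?_⟩
  have htel : ∑ k ∈ Finset.range n, (H (k + 1) - H k) = H n - H 0 :=
    Finset.sum_range_sub H n
  have hsplit : ∑ k ∈ Finset.range n,
      (2 * ‖ω (H (k + 1)) - ω (H k)‖ ^ 2 + (2 * L₁ * ε) * (H (k + 1) - H k))
      = 2 * (∑ k ∈ Finset.range n, ‖ω (H (k + 1)) - ω (H k)‖ ^ 2)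
        + (2 * L₁ * ε) * (H n - H 0) := by
    rw [Finset.sum_add_distrib, ← Finset.mul_sum, ← Finset.mul_sum, htel]
  have hHnT : H n ≤ T := (hrange n).2
  have hC : 0 < 2 * L₁ * ε := by positivity
  have : (2 * L₁ * ε) * (H n - H 0) ≤ (2 * L₁ * ε) * T := by
    rw [hH0]
    nlinarith
  nlinarith [sum1, hsplit]
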